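/- arXiv:1810.03061 — 2 statements merged into one kernel-verified Lean document; each statement's English description precedes it below -/
import Mathlib

section
/- There exist a Borel probability measure q on SL(2,ℝ) and a sequence (q_n)_{n∈ℕ} of Borel probability measures on SL(2,ℝ), all satisfying ∫ log‖α‖ dq(α) < ∞ and ∫ log‖α‖ dq_n(α) < ∞, such that q_n converges to q in the weak* topology, λ₊(q) = 0, and λ₊(q_n) ≥ 1 for all sufficiently large n. In particular, the function p ↦ λ₊(p) is not upper semicontinuous with respect to the weak* topology. -/
open MeasureTheory Filter Topology Matrix
open scoped ENNReal

noncomputable section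

abbrev SL2 : Type := Matrix.SpecialLinearGroup (Fin 2) ℝ

/-- Topology on `SL(2,ℝ)` induced from the (finite-dimensional) space of matrices. -/
instance : TopologicalSpace SL2 :=
  TopologicalSpace.induced (fun α : SL2 => (α : Matrix (Fin 2) (Fin 2) ℝ)) inferInstance

/-- Borel σ-algebra on `SL(2,ℝ)`. -/
instance : MeasurableSpace SL2 := borel SL2

/-- The ℓ² operator norm of a 2×2 real matrix. -/
noncomputable def opNorm (A : Matrix (Fin 2) (Fin 2) ℝ) : ℝ :=
  ‖LinearMap.toContinuousLinearMap (Matrix.toEuclideanLin A)‖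

/-- Distance on `SL(2,ℝ)` induced by the operator norm. -/
noncomputable def dSL (α β : SL2) : ℝ :=
  opNorm ((α : Matrix (Fin 2) (Fin 2) ℝ) - (β : Matrix (Fin 2) (Fin 2) ℝ))

/-- The sequence `n ↦ (1/n) ∫ log (nrm (B(β_{n-1}) ⋯ B(β_1) B(β_0))) dqⁿ`. -/
noncomputable def lyapSeq {X G : Type*} [MeasurableSpace X] [Monoid G]
    (B : X → G) (nrm : G → ℝ) (q : Measure X) [SigmaFinite q] : ℕ → ℝ := fun n =>
  (n : ℝ)⁻¹ * ∫ ω : Fin n → X,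
    Real.log (nrm ((List.ofFn fun i => B (ω i)).reverse.prod)) ∂(Measure.pi fun _ => q)

/-- Top Lyapunov exponent of the i.i.d. cocycle generated by `B` with distribution `q`,
`λ₊(B,q) = lim_n (1/n) ∫ log (nrm (B(β_{n-1}) ⋯ B(β_0))) dqⁿ`. -/
noncomputable def lyapCocycle {X G : Type*} [MeasurableSpace X] [Monoid G]
    (B : X → G) (nrm : G → ℝ) (q : Measure X) [SigmaFinite q] : ℝ :=
  limUnder atTop (lyapSeq B nrm q)

/-- Top Lyapunov exponent of i.i.d. products of matrices in `SL(2,ℝ)`. -/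
noncomputable def lyapPlus (p : Measure SL2) [SigmaFinite p] : ℝ :=
  lyapCocycle id (fun α : SL2 => opNorm (α : Matrix (Fin 2) (Fin 2) ℝ)) p

/-- Bottom Lyapunov exponent of i.i.d. products of matrices in `SL(2,ℝ)`:
`λ₋(p) = lim_n (1/n) ∫ log (‖(α_{n-1}⋯α₀)⁻¹‖⁻¹) dpⁿ`. -/
noncomputable def lyapMinus (p : Measure SL2) [SigmaFinite p] : ℝ :=
  lyapCocycle id (fun α : SL2 => (opNorm ((α⁻¹ : SL2) : Matrix (Fin 2) (Fin 2) ℝ))⁻¹) p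

/-- Wasserstein-1 distance of two measures, with respect to a distance function `d`:
the infimum over all couplings `π` of `μ` and `ν` of `∫ d(x,y) dπ`. -/
noncomputable def W1 {M : Type*} [MeasurableSpace M] (d : M → M → ℝ) (μ ν : Measure M) : ℝ≥0∞ :=
  ⨅ (π : Measure (M × M)) (_ : π.map Prod.fst = μ) (_ : π.map Prod.snd = ν),
    ∫⁻ x, ENNReal.ofReal (d x.1 x.2) ∂π


-- aux tests
instance : BorelSpace SL2 := ⟨rfl⟩
lemma continuous_coeSL : Continuous (fun α : SL2 => (α : Matrix (Fin 2) (Fin 2) ℝ)) :=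
  continuous_induced_dom
lemma coeSL_injective : Function.Injective (fun α : SL2 => (α : Matrix (Fin 2) (Fin 2) ℝ)) :=
  fun _ _ h => Subtype.ext h
instance : MeasurableSingletonClass SL2 := ⟨fun x => by
  have h : {x} = (fun α : SL2 => (α : Matrix (Fin 2) (Fin 2) ℝ)) ⁻¹' {(x : Matrix (Fin 2) (Fin 2) ℝ)} := by
    ext y
    simp only [Set.mem_singleton_iff, Set.mem_preimage]
    exact ⟨fun h => by rw [h], fun h => coeSL_injective h⟩
  rw [h]
  exact (isClosed_singleton.preimage continuous_coeSL).measurableSet⟩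
lemma continuous_opNorm : Continuous opNorm := by
  have h : Continuous fun A : Matrix (Fin 2) (Fin 2) ℝ =>
      (LinearMap.toContinuousLinearMap (Matrix.toEuclideanLin A)) :=
    (LinearMap.toContinuousLinearMap.toLinearMap.comp
      (Matrix.toEuclideanLin (𝕜 := ℝ) (m := Fin 2) (n := Fin 2)).toLinearMap).continuous_of_finiteDimensional
  exact continuous_norm.comp h
def gg (α : SL2) : ℝ := Real.log (opNorm (α : Matrix (Fin 2) (Fin 2) ℝ))
lemma measurable_gg : Measurable gg :=
  Real.measurable_log.comp ((continuous_opNorm.comp continuous_coeSL).measurable)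

def D (t : ℝ) : SL2 :=
  ⟨!![Real.exp t, 0; 0, Real.exp (-t)], by
    simp [Matrix.det_fin_two_of, ← Real.exp_add]⟩
lemma coe_D (t : ℝ) : (D t : Matrix (Fin 2) (Fin 2) ℝ) = !![Real.exp t, 0; 0, Real.exp (-t)] := rfl
lemma D_mul (s t : ℝ) : D s * D t = D (s + t) := by
  apply Subtype.ext
  show (D s : Matrix (Fin 2) (Fin 2) ℝ) * (D t : Matrix (Fin 2) (Fin 2) ℝ) = _
  rw [coe_D, coe_D, coe_D, Matrix.mul_fin_two]
  norm_num [← Real.exp_add, neg_add]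
  ring_nf
lemma D_zero : D 0 = 1 := by
  apply Subtype.ext
  show (D 0 : Matrix (Fin 2) (Fin 2) ℝ) = 1
  rw [coe_D]
  norm_num [← Matrix.one_fin_two]

lemma listProd_map_D (l : List ℝ) : (l.map D).prod = D l.sum := by
  induction l with
  | nil => simp [D_zero]
  | cons a l ih => simp [ih, D_mul]

lemma prod_ofFn_D {k : ℕ} (t : Fin k → ℝ) :
    (List.ofFn fun i => D (t i)).reverse.prod = D (∑ i, t i) := by
  have h1 : (List.ofFn fun i => D (t i)) = (List.ofFn t).map D := (List.map_ofFn (f := t) (g := D)).symm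
  rw [h1, ← List.map_reverse, listProd_map_D, List.sum_reverse, List.sum_ofFn]

lemma opNorm_D {t : ℝ} (ht : 0 ≤ t) :
    opNorm (D t : Matrix (Fin 2) (Fin 2) ℝ) = Real.exp t := by
  set A := (D t : Matrix (Fin 2) (Fin 2) ℝ) with hA
  set T := LinearMap.toContinuousLinearMap (Matrix.toEuclideanLin A) with hT
  have hTx : ∀ (x : EuclideanSpace ℝ (Fin 2)), (T x) 0 = Real.exp t * x 0 ∧ (T x) 1 = Real.exp (-t) * x 1 := by
    intro x
    have h : T x = (WithLp.equiv 2 (Fin 2 → ℝ)).symm (A *ᵥ (WithLp.equiv 2 (Fin 2 → ℝ)) x) :=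
      Matrix.toEuclideanLin_apply A x
    rw [h]
    constructor <;>
      simp [hA, coe_D, Matrix.mulVec, dotProduct, Fin.sum_univ_two, Matrix.vecHead, Matrix.vecTail]
  have hexple : Real.exp (-t) ≤ Real.exp t := Real.exp_le_exp.2 (neg_le_self ht)
  have hub : ‖T‖ ≤ Real.exp t := by
    apply ContinuousLinearMap.opNorm_le_bound _ (Real.exp_nonneg t)
    intro x
    obtain ⟨h0, h1⟩ := hTx x
    rw [EuclideanSpace.norm_eq, EuclideanSpace.norm_eq, Fin.sum_univ_two, Fin.sum_univ_two,
      h0, h1]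
    rw [show Real.exp t * Real.sqrt (‖x 0‖ ^ 2 + ‖x 1‖ ^ 2)
        = Real.sqrt ((Real.exp t) ^ 2 * (‖x 0‖ ^ 2 + ‖x 1‖ ^ 2)) by
      rw [Real.sqrt_mul (sq_nonneg _), Real.sqrt_sq (Real.exp_nonneg t)]]
    apply Real.sqrt_le_sqrt
    simp only [Real.norm_eq_abs, sq_abs]
    nlinarith [sq_nonneg (x 0), sq_nonneg (x 1), Real.exp_pos (-t), Real.exp_pos t,
      mul_le_mul hexple hexple (le_of_lt (Real.exp_pos (-t))) (Real.exp_nonneg t)]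
  have hlb : Real.exp t ≤ ‖T‖ := by
    have he0 : ‖(EuclideanSpace.single (0 : Fin 2) (1 : ℝ))‖ = 1 := by
      rw [EuclideanSpace.norm_single]; norm_num
    have h := T.le_opNorm (EuclideanSpace.single (0 : Fin 2) (1 : ℝ))
    rw [he0, mul_one] at h
    obtain ⟨h0, h1⟩ := hTx (EuclideanSpace.single (0 : Fin 2) (1 : ℝ))
    have hnorm : ‖T (EuclideanSpace.single (0 : Fin 2) (1 : ℝ))‖ = Real.exp t := by
      rw [EuclideanSpace.norm_eq, Fin.sum_univ_two, h0, h1]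
      simp [EuclideanSpace.single_apply]
      rw [Real.sqrt_sq (Real.exp_nonneg t)]
    rw [hnorm] at h
    exact h
  exact le_antisymm hub hlb

lemma gg_D {t : ℝ} (ht : 0 ≤ t) : gg (D t) = t := by
  rw [gg, opNorm_D ht, Real.log_exp]
lemma gg_one : gg 1 = 0 := by
  rw [← D_zero, gg_D le_rfl]


noncomputable def mix (a : ℝ≥0∞) (t : ℝ) : Measure SL2 :=
  (1 - a) • Measure.dirac 1 + a • Measure.dirac (D t)

lemma isProb_mix {a : ℝ≥0∞} (ha : a ≤ 1) (t : ℝ) : IsProbabilityMeasure (mix a t) := by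
  constructor
  simp [mix, tsub_add_cancel_of_le ha]

lemma pi_map_eval {δ : Type*} [MeasurableSpace δ] (μ : Measure δ) [IsProbabilityMeasure μ]
    {k : ℕ} (i : Fin k) :
    (Measure.pi fun _ : Fin k => μ).map (fun ω => ω i) = μ := by
  ext s hs
  rw [Measure.map_apply (measurable_pi_apply i) hs]
  have h : (fun ω : Fin k → δ => ω i) ⁻¹' s
      = Set.pi Set.univ (Function.update (fun _ : Fin k => Set.univ) i s) :=
    (Set.univ_pi_update_univ (α := fun _ : Fin k => δ) i s).symm
  rw [h, Measure.pi_pi]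
  rw [Finset.prod_eq_single i (fun j _ hj => by simp [Function.update_of_ne hj])
    (fun hi => absurd (Finset.mem_univ i) hi)]
  simp

lemma integrable_gg_dirac (x : SL2) : Integrable gg (Measure.dirac x) := by
  refine ⟨measurable_gg.aestronglyMeasurable, ?_⟩
  rw [HasFiniteIntegral, lintegral_dirac' x measurable_gg.enorm]
  exact enorm_lt_top

lemma integrable_gg_mix {a : ℝ≥0∞} (ha : a ≤ 1) (t : ℝ) : Integrable gg (mix a t) := by
  apply Integrable.add_measure
  · exact (integrable_gg_dirac 1).smul_measure (by
      exact ne_top_of_le_ne_top (by simp) (tsub_le_self (a := (1:ℝ≥0∞)) (b := a)))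
  · exact (integrable_gg_dirac (D t)).smul_measure (ne_top_of_le_ne_top (by simp) ha)

lemma integral_mix {a : ℝ≥0∞} (t : ℝ) (f : SL2 → ℝ)
    (hf : StronglyMeasurable f) (h1 : Integrable f ((1-a) • Measure.dirac (1:SL2)))
    (h2 : Integrable f (a • Measure.dirac (D t))) :
    ∫ α, f α ∂(mix a t) = (1-a).toReal * f 1 + a.toReal * f (D t) := by
  rw [mix, integral_add_measure h1 h2, integral_smul_measure, integral_smul_measure,
    integral_dirac' _ _ hf, integral_dirac' _ _ hf]
  simp

lemma integral_gg_mix {a : ℝ≥0∞} (ha : a ≤ 1) {t : ℝ} (ht : 0 ≤ t) :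
    ∫ α, gg α ∂(mix a t) = a.toReal * t := by
  have h1 : Integrable gg ((1-a) • Measure.dirac (1:SL2)) :=
    (integrable_gg_dirac 1).smul_measure (ne_top_of_le_ne_top (by simp) tsub_le_self)
  have h2 : Integrable gg (a • Measure.dirac (D t)) :=
    (integrable_gg_dirac (D t)).smul_measure (ne_top_of_le_ne_top (by simp) ha)
  rw [integral_mix t gg measurable_gg.stronglyMeasurable h1 h2, gg_one, gg_D ht]
  ring

lemma lyapSeq_mix {a : ℝ≥0∞} (ha : a ≤ 1) {t : ℝ} (ht : 0 ≤ t) [SigmaFinite (mix a t)]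
    {k : ℕ} (hk : 1 ≤ k) :
    lyapSeq id (fun α : SL2 => opNorm (α : Matrix (Fin 2) (Fin 2) ℝ)) (mix a t) k
      = a.toReal * t := by
  classical
  haveI : IsProbabilityMeasure (mix a t) := isProb_mix ha t
  set μ := mix a t with hμ
  set π := (Measure.pi fun _ : Fin k => μ) with hπ
  set E : Set SL2 := {1, D t} with hE
  have hEm : MeasurableSet E := (measurableSet_singleton (D t)).insert 1
  have hμE : μ E = 1 := by
    have hle : Measure.dirac (1:SL2) E = 1 := by
      rw [Measure.dirac_apply]
      simp [hE]
    have hle2 : Measure.dirac (D t) E = 1 := by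
      rw [Measure.dirac_apply]
      simp [hE]
    rw [hμ, mix]
    simp [hle, hle2, tsub_add_cancel_of_le ha]
  have hae : ∀ᵐ ω ∂π, ∀ i, ω i ∈ E := by
    have hS : MeasurableSet (Set.pi Set.univ fun _ : Fin k => E) :=
      MeasurableSet.univ_pi fun _ => hEm
    have hSval : π (Set.pi Set.univ fun _ : Fin k => E) = 1 := by
      rw [hπ, Measure.pi_pi]
      simp [hμE]
    have hcompl : π (Set.pi Set.univ fun _ : Fin k => E)ᶜ = 0 := by
      rw [measure_compl hS (by simp [hSval]), hSval]
      simp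
    rw [ae_iff]
    refine measure_mono_null ?_ hcompl
    intro ω hω
    simp only [Set.mem_compl_iff, Set.mem_univ_pi]
    simpa using hω
  have hcong : ∀ᵐ ω ∂π,
      Real.log (opNorm (((List.ofFn fun i => id (ω i)).reverse.prod : SL2) :
        Matrix (Fin 2) (Fin 2) ℝ)) = ∑ i, gg (ω i) := by
    filter_upwards [hae] with ω hω
    set s : Fin k → ℝ := fun i => if ω i = 1 then 0 else t with hs
    have hsnn : ∀ i, 0 ≤ s i := fun i => by
      rw [hs]; dsimp only; split <;> simp [ht]
    have hωi : ∀ i, ω i = D (s i) := by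
      intro i
      rcases hω i with h | h
      · rw [hs]; simp [h, D_zero]
      · rw [hs]
        dsimp only
        split_ifs with h1
        · rw [h1, D_zero]
        · exact h
    have hprod : (List.ofFn fun i => id (ω i)).reverse.prod = D (∑ i, s i) := by
      simp only [id_eq]
      rw [show (fun i => ω i) = fun i => D (s i) from funext hωi]
      exact prod_ofFn_D s
    rw [hprod, opNorm_D (Finset.sum_nonneg fun i _ => hsnn i), Real.log_exp]
    exact Finset.sum_congr rfl fun i _ => by rw [hωi i, gg_D (hsnn i)]
  have hint : ∀ i : Fin k, Integrable (fun ω : Fin k → SL2 => gg (ω i)) π := by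
    intro i
    apply Integrable.mono' (integrable_const |t|)
      ((measurable_gg.comp (measurable_pi_apply i)).aestronglyMeasurable)
    filter_upwards [hae] with ω hω
    show ‖gg (ω i)‖ ≤ |t|
    rcases hω i with h | h
    · rw [h, gg_one]; simp
    · rw [Set.mem_singleton_iff] at h
      rw [h, gg_D ht, Real.norm_eq_abs]
  have hmarg : ∀ i : Fin k, ∫ ω : Fin k → SL2, gg (ω i) ∂π = ∫ α, gg α ∂μ := by
    intro i
    rw [← pi_map_eval μ i,
      integral_map (measurable_pi_apply i).aemeasurable measurable_gg.aestronglyMeasurable]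
  rw [lyapSeq]
  rw [integral_congr_ae hcong, integral_finset_sum _ fun i _ => hint i]
  rw [Finset.sum_congr rfl fun i _ => hmarg i, Finset.sum_const, integral_gg_mix ha ht]
  simp only [Finset.card_univ, Fintype.card_fin, nsmul_eq_mul]
  rw [← mul_assoc, inv_mul_cancel₀ (by positivity : (0:ℝ) < k).ne', one_mul]

lemma lyapPlus_mix {a : ℝ≥0∞} (ha : a ≤ 1) {t : ℝ} (ht : 0 ≤ t) [SigmaFinite (mix a t)] :
    lyapPlus (mix a t) = a.toReal * t := by
  haveI : IsProbabilityMeasure (mix a t) := isProb_mix ha t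
  have htend : Tendsto (lyapSeq id (fun α : SL2 => opNorm (α : Matrix (Fin 2) (Fin 2) ℝ))
      (mix a t)) atTop (𝓝 (a.toReal * t)) := by
    apply Tendsto.congr' _ tendsto_const_nhds
    filter_upwards [eventually_ge_atTop 1] with k hk
    exact (lyapSeq_mix ha ht hk).symm
  exact htend.limUnder_eq

lemma lintegral_mix_lt_top {a : ℝ≥0∞} (ha : a ≤ 1) (t : ℝ) :
    ∫⁻ α, ENNReal.ofReal (Real.log (opNorm (α : Matrix (Fin 2) (Fin 2) ℝ)))
      ∂(mix a t) < ⊤ := by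
  have hm : Measurable fun α : SL2 => ENNReal.ofReal (Real.log (opNorm (α : Matrix (Fin 2) (Fin 2) ℝ))) :=
    ENNReal.measurable_ofReal.comp measurable_gg
  rw [mix, lintegral_add_measure, lintegral_smul_measure, lintegral_smul_measure,
    lintegral_dirac' _ hm, lintegral_dirac' _ hm]
  have h1 : (1 - a) * ENNReal.ofReal (Real.log (opNorm ((1:SL2) : Matrix (Fin 2) (Fin 2) ℝ))) < ⊤ :=
    ENNReal.mul_lt_top (lt_of_le_of_lt tsub_le_self ENNReal.one_lt_top) ENNReal.ofReal_lt_top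
  have h2 : a * ENNReal.ofReal (Real.log (opNorm ((D t : SL2) : Matrix (Fin 2) (Fin 2) ℝ))) < ⊤ :=
    ENNReal.mul_lt_top (lt_of_le_of_lt ha ENNReal.one_lt_top) ENNReal.ofReal_lt_top
  exact ENNReal.add_lt_top.2 ⟨h1, h2⟩

lemma integral_bcf_mix {a : ℝ≥0∞} (ha : a ≤ 1) (t : ℝ) (f : BoundedContinuousFunction SL2 ℝ) :
    ∫ α, f α ∂(mix a t) = (1-a).toReal * f 1 + a.toReal * f (D t) := by
  haveI : IsProbabilityMeasure (mix a t) := isProb_mix ha t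
  have hsm : StronglyMeasurable (f : SL2 → ℝ) := f.continuous.stronglyMeasurable
  have hd : ∀ x : SL2, Integrable (f : SL2 → ℝ) (Measure.dirac x) := fun x =>
    ⟨hsm.aestronglyMeasurable, by
      rw [HasFiniteIntegral, lintegral_dirac' x hsm.measurable.enorm]
      exact enorm_lt_top⟩
  exact integral_mix t f hsm
    ((hd 1).smul_measure (lt_of_le_of_lt tsub_le_self ENNReal.one_lt_top).ne)
    ((hd (D t)).smul_measure (lt_of_le_of_lt ha ENNReal.one_lt_top).ne)

lemma inv_succ_le_one (n : ℕ) : ((n+1 : ℝ≥0∞))⁻¹ ≤ 1 := by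
  rw [ENNReal.inv_le_one]
  exact le_add_self

lemma toReal_inv_succ (n : ℕ) : (((n+1 : ℝ≥0∞))⁻¹).toReal = ((n:ℝ)+1)⁻¹ := by
  rw [ENNReal.toReal_inv, show ((n:ℝ≥0∞)+1) = ((n+1 : ℕ) : ℝ≥0∞) by push_cast; ring,
    ENNReal.toReal_natCast]
  push_cast
  ring


/-- **Failure of upper semicontinuity of `λ₊` in the weak* topology.**
There are Borel probability measures `q` and `q_n` on `SL(2,ℝ)`, all with
`∫ log‖α‖ dq < ∞`, such that `q_n → q` in the weak* topology (i.e. tested against all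
bounded continuous functions), `λ₊(q) = 0`, yet `λ₊(q_n) ≥ 1` for all large `n`. -/
theorem lyapPlus_not_upper_semicontinuous_weakstar :
    ∃ (q : ProbabilityMeasure SL2) (qn : ℕ → ProbabilityMeasure SL2),
      (∫⁻ α, ENNReal.ofReal (Real.log (opNorm (α : Matrix (Fin 2) (Fin 2) ℝ)))
          ∂(q : Measure SL2) < ⊤) ∧
      (∀ n, ∫⁻ α, ENNReal.ofReal (Real.log (opNorm (α : Matrix (Fin 2) (Fin 2) ℝ)))
          ∂(qn n : Measure SL2) < ⊤) ∧
      (∀ f : BoundedContinuousFunction SL2 ℝ,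
        Tendsto (fun n => ∫ α, f α ∂(qn n : Measure SL2)) atTop
          (𝓝 (∫ α, f α ∂(q : Measure SL2)))) ∧
      lyapPlus (q : Measure SL2) = 0 ∧
      (∃ N : ℕ, ∀ n ≥ N, 1 ≤ lyapPlus (qn n : Measure SL2)) := by
  refine ⟨⟨mix 0 0, isProb_mix zero_le_one 0⟩,
    fun n => ⟨mix ((n+1 : ℝ≥0∞))⁻¹ ((n:ℝ)+1), isProb_mix (inv_succ_le_one n) _⟩,
    ?_, ?_, ?_, ?_, ?_⟩
  · exact lintegral_mix_lt_top zero_le_one 0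
  · exact fun n => lintegral_mix_lt_top (inv_succ_le_one n) _
  · intro f
    show Tendsto (fun n : ℕ => ∫ α, f α ∂(mix ((n+1 : ℝ≥0∞))⁻¹ ((n:ℝ)+1))) atTop
      (𝓝 (∫ α, f α ∂(mix 0 0)))
    have hq : ∫ α, f α ∂(mix 0 0) = f 1 := by
      rw [integral_bcf_mix zero_le_one 0 f]
      simp
    have hqn : ∀ n : ℕ, ∫ α, f α ∂(mix ((n+1 : ℝ≥0∞))⁻¹ ((n:ℝ)+1))
        = (1 - ((n:ℝ)+1)⁻¹) * f 1 + ((n:ℝ)+1)⁻¹ * f (D ((n:ℝ)+1)) := by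
      intro n
      rw [integral_bcf_mix (inv_succ_le_one n) _ f,
        ENNReal.toReal_sub_of_le (inv_succ_le_one n) ENNReal.one_ne_top,
        toReal_inv_succ]
      norm_num
    simp only [hq, hqn]
    have hc : Tendsto (fun n : ℕ => ((n:ℝ)+1)⁻¹) atTop (𝓝 0) :=
      tendsto_one_div_add_atTop_nhds_zero_nat.congr (by intro n; rw [one_div])
    have h1 : Tendsto (fun n : ℕ => (1 - ((n:ℝ)+1)⁻¹) * f 1) atTop (𝓝 (f 1)) := by
      have := ((tendsto_const_nhds (x := (1:ℝ))).sub hc).mul_const (f 1)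
      simpa using this
    have h2 : Tendsto (fun n : ℕ => ((n:ℝ)+1)⁻¹ * f (D ((n:ℝ)+1))) atTop (𝓝 0) := by
      refine squeeze_zero_norm (fun n => ?_) (by simpa using hc.mul_const ‖f‖ :
        Tendsto (fun n : ℕ => ((n:ℝ)+1)⁻¹ * ‖f‖) atTop (𝓝 0))
      rw [norm_mul, Real.norm_eq_abs (((n:ℝ)+1)⁻¹), abs_of_nonneg (by positivity)]
      exact mul_le_mul_of_nonneg_left (f.norm_coe_le_norm _) (by positivity)
    simpa using h1.add h2
  · haveI : IsProbabilityMeasure (mix 0 0) := isProb_mix zero_le_one 0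
    show lyapPlus (mix 0 0) = 0
    rw [show lyapPlus (mix 0 0) = (0:ℝ≥0∞).toReal * 0 from lyapPlus_mix zero_le_one le_rfl]
    simp
  · refine ⟨0, fun n _ => ?_⟩
    haveI : IsProbabilityMeasure (mix ((n+1 : ℝ≥0∞))⁻¹ ((n:ℝ)+1)) :=
      isProb_mix (inv_succ_le_one n) _
    show (1:ℝ) ≤ lyapPlus (mix ((n+1 : ℝ≥0∞))⁻¹ ((n:ℝ)+1))
    rw [show lyapPlus (mix ((n+1 : ℝ≥0∞))⁻¹ ((n:ℝ)+1))
        = (((n+1 : ℝ≥0∞))⁻¹).toReal * ((n:ℝ)+1) from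
      lyapPlus_mix (inv_succ_le_one n) (by positivity)]
    rw [toReal_inv_succ, inv_mul_cancel₀ (by positivity)]
end
end

section
/- Let n ≥ 1 be an integer, ε = 1/(n(n+1)) and δ = arctan ε. Set D_k = diag(k, k⁻¹) and E_k = diag(k⁻¹, k) for k ∈ ℕ, R_ε = [[1,0],[ε,1]], and R_δ = [[cos δ, −sin δ],[sin δ, cos δ]]. Then the product P = (D_n R_ε) · D_n · (D_{n+1} R_δ) · E_{n+1} · (E_n R_ε) is an antidiagonal matrix (both of its diagonal entries are 0). Consequently P maps the horizontal axis ℝ·(1,0) onto the vertical axis ℝ·(0,1) and maps the vertical axis onto the horizontal axis. -/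
open Matrix

/-- **The perturbed block of five matrices is antidiagonal.**
For `n ≥ 1`, `ε = 1/(n(n+1))`, `δ = arctan ε`, `D_k = diag(k, k⁻¹)`, `E_k = diag(k⁻¹, k)`,
`R_ε = [[1,0],[ε,1]]` and `R_δ` the rotation by `δ`, the product
`P = (D_n R_ε) · D_n · (D_{n+1} R_δ) · E_{n+1} · (E_n R_ε)` has both diagonal entries
equal to `0`; consequently `P` maps the horizontal axis `ℝ·(1,0)` onto the vertical axis
`ℝ·(0,1)` and the vertical axis onto the horizontal axis. -/
theorem block5_antidiagonal
    (n : ℕ) (hn : 1 ≤ n) (ε δ : ℝ)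
    (hε : ε = 1 / (n * (n + 1)))
    (hδ : δ = Real.arctan ε)
    (D E : ℕ → Matrix (Fin 2) (Fin 2) ℝ)
    (hD : ∀ k, D k = !![(k : ℝ), 0; 0, (k : ℝ)⁻¹])
    (hE : ∀ k, E k = !![(k : ℝ)⁻¹, 0; 0, (k : ℝ)])
    (Rε Rδ : Matrix (Fin 2) (Fin 2) ℝ)
    (hRε : Rε = !![1, 0; ε, 1])
    (hRδ : Rδ = !![Real.cos δ, -Real.sin δ; Real.sin δ, Real.cos δ])
    (P : Matrix (Fin 2) (Fin 2) ℝ)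
    (hP : P = (D n * Rε) * D n * (D (n + 1) * Rδ) * E (n + 1) * (E n * Rε)) :
    P 0 0 = 0 ∧ P 1 1 = 0 ∧
    Submodule.map (Matrix.toLin' P) (Submodule.span ℝ {![1, 0]}) =
      Submodule.span ℝ {![0, 1]} ∧
    Submodule.map (Matrix.toLin' P) (Submodule.span ℝ {![0, 1]}) =
      Submodule.span ℝ {![1, 0]} := by
  have hnpos : (0 : ℝ) < n := by exact_mod_cast hn
  have hn0 : (n : ℝ) ≠ 0 := ne_of_gt hnpos
  have hp0 : (n : ℝ) + 1 ≠ 0 := by positivity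
  have hεpos : 0 < ε := by rw [hε]; positivity
  have hcpos : 0 < Real.cos δ := by
    rw [hδ, Real.cos_arctan]; positivity
  have hs : Real.sin δ = ε * Real.cos δ := by
    rw [hδ, Real.sin_arctan, Real.cos_arctan]
    ring
  have hP00 : P 0 0 = 0 := by
    rw [hP, hD, hD, hE, hE, hRε, hRδ]
    simp only [Matrix.mul_apply, Fin.sum_univ_two, Matrix.cons_val_zero,
      Matrix.cons_val_one, Matrix.head_cons, Matrix.head_fin_const, Nat.cast_add,
      Nat.cast_one, Matrix.of_apply]
    rw [hs, hε]
    field_simp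
    ring
  have hP11 : P 1 1 = 0 := by
    rw [hP, hD, hD, hE, hE, hRε, hRδ]
    simp only [Matrix.mul_apply, Fin.sum_univ_two, Matrix.cons_val_zero,
      Matrix.cons_val_one, Matrix.head_cons, Matrix.head_fin_const, Nat.cast_add,
      Nat.cast_one, Matrix.of_apply]
    rw [hs, hε]
    field_simp
    ring
  have hP10 : P 1 0 = ε * Real.cos δ / n + ε * Real.cos δ / ((n:ℝ)^3 * ((n:ℝ)+1)^2) := by
    rw [hP, hD, hD, hE, hE, hRε, hRδ]
    simp only [Matrix.mul_apply, Fin.sum_univ_two, Matrix.cons_val_zero,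
      Matrix.cons_val_one, Matrix.head_cons, Matrix.head_fin_const, Nat.cast_add,
      Nat.cast_one, Matrix.of_apply]
    rw [hs, hε]
    field_simp
    ring
  have hP01 : P 0 1 = -((n:ℝ)^3 * ((n:ℝ)+1)^2 * (ε * Real.cos δ)) := by
    rw [hP, hD, hD, hE, hE, hRε, hRδ]
    simp only [Matrix.mul_apply, Fin.sum_univ_two, Matrix.cons_val_zero,
      Matrix.cons_val_one, Matrix.head_cons, Matrix.head_fin_const, Nat.cast_add,
      Nat.cast_one, Matrix.of_apply]
    rw [hs, hε]
    field_simp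
    ring
  have h10ne : P 1 0 ≠ 0 := by rw [hP10]; positivity
  have h01ne : P 0 1 ≠ 0 := by
    rw [hP01]
    have : 0 < (n:ℝ)^3 * ((n:ℝ)+1)^2 * (ε * Real.cos δ) := by positivity
    linarith
  have hv1 : Matrix.toLin' P ![1, 0] = P 1 0 • ![0, 1] := by
    funext i
    fin_cases i <;>
      simp [Matrix.toLin'_apply, Matrix.mulVec, dotProduct,
        Fin.sum_univ_two, Matrix.vecHead, Matrix.vecTail, hP00]
  have hv2 : Matrix.toLin' P ![0, 1] = P 0 1 • ![1, 0] := by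
    funext i
    fin_cases i <;>
      simp [Matrix.toLin'_apply, Matrix.mulVec, dotProduct,
        Fin.sum_univ_two, Matrix.vecHead, Matrix.vecTail, hP11]
  refine ⟨hP00, hP11, ?_, ?_⟩
  · rw [Submodule.map_span, Set.image_singleton, hv1,
      Submodule.span_singleton_smul_eq (isUnit_iff_ne_zero.mpr h10ne)]
  · rw [Submodule.map_span, Set.image_singleton, hv2,
      Submodule.span_singleton_smul_eq (isUnit_iff_ne_zero.mpr h01ne)]
end
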